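/- Let R be a reduced ring and let S be the subring of T_n(R) consisting of all n×n upper triangular matrices over R whose diagonal entries are all equal (i.e., matrices of the form a·I_n plus a strictly upper triangular matrix, with a ∈ R). Then S is almost Armendariz. -/

import Mathlib

/-- An element `a` of a ring `R` is *strongly nilpotent* if every sequence
`a₀ = a`, `aₙ₊₁ ∈ aₙ R aₙ` is eventually zero. -/
def IsStronglyNilpotent {R : Type*} [Ring R] (a : R) : Prop :=
  ∀ s : ℕ → R, s 0 = a → (∀ n : ℕ, ∃ r : R, s (n + 1) = s n * r * s n) → ∃ n : ℕ, s n = 0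

/-- The prime radical `P(R)` of a ring `R`: the intersection of all prime two-sided
ideals of `R`, equivalently the set of strongly nilpotent elements of `R`. -/
def primeRadical (R : Type*) [Ring R] : Set R :=
  {a : R | IsStronglyNilpotent a}

/-- A ring `R` is *almost Armendariz* if whenever `f, g ∈ R[x]` satisfy `f g = 0`, every
product of a coefficient of `f` with a coefficient of `g` lies in the prime radical `P(R)`. -/
def IsAlmostArmendariz (R : Type*) [Ring R] : Prop :=
  ∀ f g : Polynomial R, f * g = 0 → ∀ i j : ℕ, f.coeff i * g.coeff j ∈ primeRadical R

/-- The subring `S` of `T_n(R)` consisting of all upper triangular `n × n` matrices whose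
diagonal entries are all equal. -/
def constDiagUpperTriangularSubring (R : Type*) [Ring R] (n : ℕ) :
    Subring (Matrix (Fin n) (Fin n) R) where
  carrier := {M | (∀ i j : Fin n, j < i → M i j = 0) ∧ ∀ i j : Fin n, M i i = M j j}
  zero_mem' := ⟨fun _ _ _ => rfl, fun _ _ => rfl⟩
  one_mem' := ⟨fun _ _ h => Matrix.one_apply_ne (ne_of_gt h),
    fun i j => by rw [Matrix.one_apply_eq, Matrix.one_apply_eq]⟩
  add_mem' := fun ha hb => ⟨fun i j h => by
      simp only [Matrix.add_apply, ha.1 i j h, hb.1 i j h, add_zero],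
    fun i j => by simp only [Matrix.add_apply, ha.2 i j, hb.2 i j]⟩
  neg_mem' := fun ha => ⟨fun i j h => by
      simp only [Matrix.neg_apply, ha.1 i j h, neg_zero],
    fun i j => by simp only [Matrix.neg_apply, ha.2 i j]⟩
  mul_mem' := fun {a b} ha hb => by
    have hdiag : ∀ i : Fin n, (a * b) i i = a i i * b i i := by
      intro i
      rw [Matrix.mul_apply, Finset.sum_eq_single i]
      · intro k _ hk
        rcases lt_or_gt_of_ne hk with hlt | hgt
        · rw [ha.1 i k hlt, zero_mul]
        · rw [hb.1 k i hgt, mul_zero]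
      · intro h; exact absurd (Finset.mem_univ i) h
    refine ⟨fun i j h => ?_, fun i j => ?_⟩
    · rw [Matrix.mul_apply]
      apply Finset.sum_eq_zero
      intro k _
      rcases le_or_gt k j with hk | hk
      · rw [ha.1 i k (lt_of_le_of_lt hk h), zero_mul]
      · rw [hb.1 k j hk, mul_zero]
    · rw [hdiag i, hdiag j, ha.2 i j, hb.2 i j]


section Reduced
variable {A : Type*} [Ring A] [IsReduced A]

lemma red_comm {a b : A} (h : a * b = 0) : b * a = 0 := by
  have : (b * a) ^ 2 = 0 := by
    have e : b * a * (b * a) = b * (a * b) * a := by noncomm_ring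
    rw [sq, e, h, mul_zero, zero_mul]
  exact IsReduced.eq_zero _ ⟨2, this⟩

lemma red_mid {a b : A} (h : a * b = 0) (r : A) : a * r * b = 0 := by
  have hba : b * a = 0 := red_comm h
  have : (a * r * b) ^ 2 = 0 := by
    have e : a * r * b * (a * r * b) = a * r * (b * a) * (r * b) := by noncomm_ring
    rw [sq, e, hba, mul_zero, zero_mul]
  exact IsReduced.eq_zero _ ⟨2, this⟩

lemma red_sq {a b : A} (h : a * b * b = 0) : a * b = 0 := by
  have h1 : b * (a * b) = 0 := red_comm h
  have : (a * b) ^ 2 = 0 := by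
    rw [sq, mul_assoc, h1, mul_zero]
  exact IsReduced.eq_zero _ ⟨2, this⟩

theorem armendariz (f g : Polynomial A) (h : f * g = 0) :
    ∀ i j : ℕ, f.coeff i * g.coeff j = 0 := by
  have hc : ∀ k : ℕ, ∑ x ∈ Finset.HasAntidiagonal.antidiagonal k, f.coeff x.1 * g.coeff x.2 = 0 := by
    intro k
    rw [← Polynomial.coeff_mul, h, Polynomial.coeff_zero]
  suffices H : ∀ k, ∀ j ≤ k, f.coeff (k - j) * g.coeff j = 0 by
    intro i j
    have := H (i + j) j (Nat.le_add_left _ _)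
    simpa using this
  intro k
  induction k using Nat.strong_induction_on with
  | _ k IH =>
    intro j
    induction j using Nat.strong_induction_on with
    | _ j IHj =>
      intro hj
      -- multiply the coefficient identity at k by g.coeff j on the right
      have hsum : ∑ x ∈ Finset.HasAntidiagonal.antidiagonal k,
          f.coeff x.1 * g.coeff x.2 * g.coeff j = 0 := by
        rw [← Finset.sum_mul, hc k, zero_mul]
      have hkey : f.coeff (k - j) * g.coeff j * g.coeff j = 0 := by
        rw [Finset.sum_eq_single (k - j, j)] at hsum
        · exact hsum
        · rintro ⟨p, q⟩ hmem hne
          rw [Finset.HasAntidiagonal.mem_antidiagonal] at hmem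
          rcases lt_trichotomy q j with hq | hq | hq
          · have : f.coeff p * g.coeff q = 0 := by
              have := IHj q hq (by omega)
              have hp : p = k - q := by omega
              rw [hp]; exact this
            rw [this, zero_mul]
          · exfalso; apply hne; simp only [Prod.ext_iff]; omega
          · have hpj : p + j < k := by omega
            have : f.coeff p * g.coeff j = 0 := by
              have := IH (p + j) hpj j (Nat.le_add_left _ _)
              simpa using this
            exact red_mid this (g.coeff q)
        · intro hnm
          exfalso; apply hnm; rw [Finset.HasAntidiagonal.mem_antidiagonal]; omega
      exact red_sq hkey

end Reduced

section Matrices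
variable {R : Type*} [Ring R] {n : ℕ}

/-- `Pd d A`: the entries of `A` vanish below the `d`-th superdiagonal. -/
def Pd (d : ℕ) (A : Matrix (Fin n) (Fin n) R) : Prop :=
  ∀ i j : Fin n, (j : ℕ) < (i : ℕ) + d → A i j = 0

lemma Pd_mul {d e : ℕ} {A B : Matrix (Fin n) (Fin n) R} (hA : Pd d A) (hB : Pd e B) :
    Pd (d + e) (A * B) := by
  intro i j hij
  rw [Matrix.mul_apply]
  apply Finset.sum_eq_zero
  intro k _
  rcases lt_or_ge (k : ℕ) ((i : ℕ) + d) with hk | hk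
  · rw [hA i k hk, zero_mul]
  · rw [hB k j (by omega), mul_zero]

lemma Pd_mono {d d' : ℕ} (h : d' ≤ d) {A : Matrix (Fin n) (Fin n) R} (hA : Pd d A) : Pd d' A :=
  fun i j hij => hA i j (by omega)

lemma Pd_zero_of_mem {A : Matrix (Fin n) (Fin n) R}
    (hA : ∀ i j : Fin n, j < i → A i j = 0) : Pd 0 A := by
  intro i j hij
  exact hA i j (by rw [Fin.lt_def]; omega)

lemma diag_mul_of_triu (A B : Matrix (Fin n) (Fin n) R)
    (hA : ∀ i j : Fin n, j < i → A i j = 0) (hB : ∀ i j : Fin n, j < i → B i j = 0)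
    (i : Fin n) : (A * B) i i = A i i * B i i := by
  rw [Matrix.mul_apply, Finset.sum_eq_single i]
  · intro k _ hk
    rcases lt_or_gt_of_ne hk with hlt | hgt
    · rw [hA i k hlt, zero_mul]
    · rw [hB k i hgt, mul_zero]
  · intro hmm; exact absurd (Finset.mem_univ i) hmm

/-- Evaluation of the `i`-th diagonal entry is a ring hom on `S`. -/
def diagHom (i : Fin n) : constDiagUpperTriangularSubring R n →+* R where
  toFun M := (M : Matrix (Fin n) (Fin n) R) i i
  map_one' := Matrix.one_apply_eq i
  map_mul' a b := diag_mul_of_triu _ _ a.2.1 b.2.1 i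
  map_zero' := rfl
  map_add' _ _ := rfl

lemma sn_of_Pd1 (a : constDiagUpperTriangularSubring R n)
    (ha : Pd 1 (a : Matrix (Fin n) (Fin n) R)) : IsStronglyNilpotent a := by
  intro s h0 hs
  have key : ∀ k : ℕ, Pd (k + 1) ((s k : Matrix (Fin n) (Fin n) R)) := by
    intro k
    induction k with
    | zero => rw [h0]; exact ha
    | succ k ih =>
      obtain ⟨r, hr⟩ := hs k
      rw [hr]
      have h1 : Pd ((k + 1) + (0 + (k + 1)))
          ((s k : Matrix (Fin n) (Fin n) R) * ((r : Matrix (Fin n) (Fin n) R) *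
            (s k : Matrix (Fin n) (Fin n) R))) :=
        Pd_mul ih (Pd_mul (Pd_zero_of_mem r.2.1) ih)
      have : ((s k * r * s k : constDiagUpperTriangularSubring R n) :
          Matrix (Fin n) (Fin n) R) = (s k : Matrix (Fin n) (Fin n) R) *
            ((r : Matrix (Fin n) (Fin n) R) * (s k : Matrix (Fin n) (Fin n) R)) := by
        push_cast [mul_assoc]; ring
      rw [this]
      exact Pd_mono (by omega) h1
  refine ⟨n, ?_⟩
  have hk := key n
  apply Subtype.ext
  ext i j
  exact hk i j (by omega)
end Matrices

/-- Let `R` be a reduced ring.  Then the ring `S` of upper triangular `n × n` matrices over `R`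
with constant diagonal is almost Armendariz. -/
theorem constDiagUpperTriangular_almostArmendariz {R : Type*} [Ring R] [IsReduced R] (n : ℕ) :
    IsAlmostArmendariz (constDiagUpperTriangularSubring R n) := by
  intro f g hfg p q
  apply sn_of_Pd1
  intro i j hij
  have hmem := (f.coeff p * g.coeff q).2
  have hval : ((f.coeff p * g.coeff q : constDiagUpperTriangularSubring R n) :
      Matrix (Fin n) (Fin n) R) = ((f.coeff p : Matrix (Fin n) (Fin n) R)) *
        ((g.coeff q : Matrix (Fin n) (Fin n) R)) := rfl
  rcases lt_or_eq_of_le (Nat.lt_succ_iff.mp hij) with hlt | heq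
  · exact hmem.1 i j (by rwa [Fin.lt_def])
  · -- diagonal entry: use the diagonal ring hom and Armendariz over R
    have hji : j = i := Fin.ext heq
    subst hji
    set φ := diagHom (R := R) (n := n) j with hφ
    have hmap : (f.map φ) * (g.map φ) = 0 := by
      rw [← Polynomial.map_mul, hfg, Polynomial.map_zero]
    have h0 : φ (f.coeff p) * φ (g.coeff q) = 0 := by
      have := armendariz (f.map φ) (g.map φ) hmap p q
      rwa [Polynomial.coeff_map, Polynomial.coeff_map] at this
    rw [hval, diag_mul_of_triu _ _ (f.coeff p).2.1 (g.coeff q).2.1 j]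
    exact h0
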